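/- Let n, q ≥ 2 be integers. The map φ : M̄_n → M̄_q defined by φ(0) = 0 and φ((k,d,m)) = (1 + (q−1)/(n−1)·(k−1), (q−1)/(n−1)·d, 1 + (q−1)/(n−1)·(m−1)) is well defined, bijective, satisfies φ(x·y) = φ(x)·φ(y) for all x, y ∈ M̄_n, and maps the identity (1,0,n) of M̄_n to the identity (1,0,q) of M̄_q. Hence M̄_n and M̄_q are isomorphic monoids for all n, q ≥ 2. -/

import Mathlib

noncomputable section

/-- Elements of the monoid: `none` is the zero element, `some (k, d, m)` a triple. -/
abbrev El := Option (ℝ × ℝ × ℝ)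

/-- Membership in `M̄_n`. -/
def inM (n : ℕ) : El → Prop
  | none => True
  | some (k, d, m) => 1 - min 0 d ≤ k ∧ k ≤ m ∧ m ≤ (n : ℝ) - max 0 d

/-- The product on `M̄_n`. -/
def mul : El → El → El
  | some (k, d, m), some (k', d', m') =>
      if max k (k' - d) ≤ min m (m' - d) then
        some (max k (k' - d), d + d', min m (m' - d))
      else none
  | _, _ => none

/-- The transpose (semigroup inverse). -/
def transp : El → El
  | none => none
  | some (k, d, m) => some (k + d, -d, m + d)

/-- The height function. -/
def height : El → ℝ
  | none => -1
  | some (k, _, m) => m - k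

/-- `pw x j` is the `(j+1)`-st power of `x` (so `pw x 0 = x`). -/
def pw (x : El) : ℕ → El
  | 0 => x
  | j + 1 => mul (pw x j) x

/-- The affine map from M̄_n to M̄_q. -/
def phi7 (n q : ℕ) : El → El
  | none => none
  | some (k, d, m) =>
      some (1 + ((q : ℝ) - 1) / ((n : ℝ) - 1) * (k - 1),
            ((q : ℝ) - 1) / ((n : ℝ) - 1) * d,
            1 + ((q : ℝ) - 1) / ((n : ℝ) - 1) * (m - 1))


lemma affmax (c a b : ℝ) (hc : 0 ≤ c) :
    max (1 + c*(a-1)) (1 + c*(b-1)) = 1 + c*(max a b - 1) := by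
  rcases le_total a b with h | h
  · rw [max_eq_right h, max_eq_right (by nlinarith)]
  · rw [max_eq_left h, max_eq_left (by nlinarith)]

lemma affmin (c a b : ℝ) (hc : 0 ≤ c) :
    min (1 + c*(a-1)) (1 + c*(b-1)) = 1 + c*(min a b - 1) := by
  rcases le_total a b with h | h
  · rw [min_eq_left h, min_eq_left (by nlinarith)]
  · rw [min_eq_right h, min_eq_right (by nlinarith)]

lemma cpos (n q : ℕ) (hn : 2 ≤ n) (hq : 2 ≤ q) :
    0 < ((q : ℝ) - 1) / ((n : ℝ) - 1) := by
  have h1 : (1:ℝ) < n := by exact_mod_cast Nat.lt_of_lt_of_le one_lt_two hn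
  have h2 : (1:ℝ) < q := by exact_mod_cast Nat.lt_of_lt_of_le one_lt_two hq
  exact div_pos (by linarith) (by linarith)

lemma mapsTo_aux (n q : ℕ) (hn : 2 ≤ n) (hq : 2 ≤ q) :
    ∀ x : El, inM n x → inM q (phi7 n q x) := by
  intro x hx
  match x with
  | none => trivial
  | some (k, d, m) =>
    obtain ⟨h1, h2, h3⟩ := hx
    set c := ((q : ℝ) - 1) / ((n : ℝ) - 1) with hc
    have hcpos : 0 < c := cpos n q hn hq
    have hn1 : ((n:ℝ) - 1) ≠ 0 := by
      have : (1:ℝ) < n := by exact_mod_cast Nat.lt_of_lt_of_le one_lt_two hn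
      linarith
    have hcn : c * ((n:ℝ) - 1) = (q:ℝ) - 1 := div_mul_cancel₀ _ hn1
    have hmin : min 0 (c * d) = c * min 0 d := by
      rcases le_total 0 d with h | h
      · rw [min_eq_left h, min_eq_left (by nlinarith), mul_zero]
      · rw [min_eq_right h, min_eq_right (by nlinarith)]
    have hmax : max 0 (c * d) = c * max 0 d := by
      rcases le_total 0 d with h | h
      · rw [max_eq_right h, max_eq_right (by nlinarith)]
      · rw [max_eq_left h, max_eq_left (by nlinarith), mul_zero]
    refine ⟨?_, ?_, ?_⟩
    · show 1 - min 0 (c * d) ≤ 1 + c * (k - 1)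
      rw [hmin]; nlinarith
    · show 1 + c * (k - 1) ≤ 1 + c * (m - 1)
      nlinarith
    · show 1 + c * (m - 1) ≤ (q:ℝ) - max 0 (c * d)
      rw [hmax]; nlinarith

lemma leftInv_aux (n q : ℕ) (hn : 2 ≤ n) (hq : 2 ≤ q) :
    ∀ x : El, phi7 q n (phi7 n q x) = x := by
  intro x
  have hn1 : ((n:ℝ) - 1) ≠ 0 := by
    have : (1:ℝ) < n := by exact_mod_cast Nat.lt_of_lt_of_le one_lt_two hn
    linarith
  have hq1 : ((q:ℝ) - 1) ≠ 0 := by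
    have : (1:ℝ) < q := by exact_mod_cast Nat.lt_of_lt_of_le one_lt_two hq
    linarith
  match x with
  | none => rfl
  | some (k, d, m) =>
    simp only [phi7]
    have hcc : ((n:ℝ) - 1) / ((q:ℝ) - 1) * (((q:ℝ) - 1) / ((n:ℝ) - 1)) = 1 := by
      field_simp
    refine congrArg some (Prod.ext ?_ (Prod.ext ?_ ?_)) <;> simp only
    · linear_combination (k - 1) * hcc
    · linear_combination d * hcc
    · linear_combination (m - 1) * hcc

lemma mul_aux (n q : ℕ) (hn : 2 ≤ n) (hq : 2 ≤ q) :
    ∀ x y : El, phi7 n q (mul x y) = mul (phi7 n q x) (phi7 n q y) := by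
  intro x y
  match x, y with
  | none, none => rfl
  | none, some _ => rfl
  | some _, none => rfl
  | some (k, d, m), some (k', d', m') =>
    set c := ((q : ℝ) - 1) / ((n : ℝ) - 1) with hcdef
    have hcpos : 0 < c := cpos n q hn hq
    simp only [mul, phi7]
    have e1 : (1 + c * (k' - 1)) - c * d = 1 + c * ((k' - d) - 1) := by ring
    have e2 : (1 + c * (m' - 1)) - c * d = 1 + c * ((m' - d) - 1) := by ring
    have hM : max (1 + c * (k - 1)) ((1 + c * (k' - 1)) - c * d)
        = 1 + c * (max k (k' - d) - 1) := by
      rw [e1]; exact affmax c _ _ hcpos.le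
    have hm : min (1 + c * (m - 1)) ((1 + c * (m' - 1)) - c * d)
        = 1 + c * (min m (m' - d) - 1) := by
      rw [e2]; exact affmin c _ _ hcpos.le
    by_cases hif : max k (k' - d) ≤ min m (m' - d)
    · rw [if_pos hif, if_pos (by rw [hM, hm]; nlinarith)]
      simp only [phi7, ← hcdef, hM, hm]
      refine congrArg some (Prod.ext rfl (Prod.ext ?_ rfl))
      simp only; ring
    · rw [if_neg hif, if_neg]
      rw [hM, hm]
      intro hcon
      exact hif (by nlinarith)

theorem stmt7body (n q : ℕ) (hn : 2 ≤ n) (hq : 2 ≤ q) :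
    Set.BijOn (phi7 n q) {x : El | inM n x} {x : El | inM q x} ∧
    (∀ x y : El, inM n x → inM n y →
      phi7 n q (mul x y) = mul (phi7 n q x) (phi7 n q y)) ∧
    phi7 n q (some (1, 0, (n : ℝ))) = some (1, 0, (q : ℝ)) := by
  have hn1 : ((n:ℝ) - 1) ≠ 0 := by
    have : (1:ℝ) < n := by exact_mod_cast Nat.lt_of_lt_of_le one_lt_two hn
    linarith
  refine ⟨?_, fun x y _ _ => mul_aux n q hn hq x y, ?_⟩
  · have hinv : Set.InvOn (phi7 q n) (phi7 n q)
        {x : El | inM n x} {x : El | inM q x} :=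
      ⟨fun x _ => leftInv_aux n q hn hq x, fun y _ => leftInv_aux q n hq hn y⟩
    exact hinv.bijOn (fun x hx => mapsTo_aux n q hn hq x hx)
      (fun y hy => mapsTo_aux q n hq hn y hy)
  · simp only [phi7]
    refine congrArg some (Prod.ext ?_ (Prod.ext ?_ ?_)) <;> simp only
    · ring
    · ring
    · field_simp
      ring

/-- φ is a well-defined bijection from M̄_n onto M̄_q, is
multiplicative on M̄_n, and sends the identity (1,0,n) to the identity (1,0,q);
hence all the monoids M̄_n, n ≥ 2, are isomorphic. -/
theorem stmt7 (n q : ℕ) (hn : 2 ≤ n) (hq : 2 ≤ q) :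
    Set.BijOn (phi7 n q) {x : El | inM n x} {x : El | inM q x} ∧
    (∀ x y : El, inM n x → inM n y →
      phi7 n q (mul x y) = mul (phi7 n q x) (phi7 n q y)) ∧
    phi7 n q (some (1, 0, (n : ℝ))) = some (1, 0, (q : ℝ)) := by
  exact stmt7body n q hn hq
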